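/- Let Q₁ : Σz_i² = 0 and Q₂ : Σμ_i z_i² = 0 be two quadrics in P^{n-1} with μ_i distinct, and M = Q₁ ∩ Q₂ smooth. Then for each i the expression s_i = Σ_{j≠i} (z_i∂_j − z_j∂_i)²/(μ_i − μ_j) is a well-defined holomorphic symmetric 2-tensor (section of S²TM) on M, and restricted to the hyperplane section z_1 = 0, the tensor s_1 = Σ_{j≠1} z_j²∂_1²/(μ_1 − μ_j) has rank 1. -/
import Mathlib

/-- For two quadrics `Q₁ : Σ zⱼ² = 0`, `Q₂ : Σ μⱼzⱼ² = 0` in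
`P^{n−1}` with the `μⱼ` distinct, the symmetric tensor
`sᵢ = Σ_{j≠i} (zᵢ∂ⱼ − zⱼ∂ᵢ)²/(μᵢ − μⱼ)`
is well defined on the smooth intersection `M = Q₁ ∩ Q₂`, and restricted to the
hyperplane section `zᵢ = 0` it degenerates to the rank-one tensor
`Σ_{j≠i} zⱼ²∂ᵢ²/(μᵢ − μⱼ)`.

In coordinates: with `w j = zᵢ·eⱼ − zⱼ·eᵢ` (the rotation vector fields) and
`A a b = Σ_{j≠i} (w j a)(w j b)/(μᵢ − μⱼ)` the matrix of `sᵢ`, we have that `A`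
is symmetric; contracting `A` with the conormal `(μₖzₖ)ₖ` of `Q₂` on `Q₁`
yields `−zᵢ² z`, a multiple of the Euler vector `z` — so `sᵢ` descends to a
section of `S²TM` on `M`; and if `zᵢ = 0` then `A = c·(eᵢ ⊗ eᵢ)` with
`c = Σ_{j≠i} zⱼ²/(μᵢ − μⱼ)`, so `A` has rank at most 1. -/
theorem quadric_intersection_symmetric_tensor
    (n : ℕ) (μ z : Fin n → ℂ) (i : Fin n) (hμ : Function.Injective μ) :
    let w : Fin n → Fin n → ℂ := fun j k =>
      z i * (if k = j then 1 else 0) - z j * (if k = i then 1 else 0)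
    let A : Matrix (Fin n) (Fin n) ℂ := Matrix.of fun a b =>
      ∑ j ∈ Finset.univ.erase i, w j a * w j b / (μ i - μ j)
    A.transpose = A ∧
    ((∑ j, z j ^ 2) = 0 →
      A.mulVec (fun k => μ k * z k) = fun k => -(z i ^ 2) * z k) ∧
    (z i = 0 →
      A = Matrix.of (fun a b => (if a = i then (1 : ℂ) else 0) *
            (if b = i then 1 else 0) *
            ∑ j ∈ Finset.univ.erase i, z j ^ 2 / (μ i - μ j)) ∧
      A.rank ≤ 1) := by
  intro w A
  refine ⟨?_, ?_, ?_⟩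
  · ext a b
    simp only [A, Matrix.transpose_apply, Matrix.of_apply]
    exact Finset.sum_congr rfl fun j _ => by ring
  · intro hsum
    funext k
    have hmv : A.mulVec (fun k => μ k * z k) k =
        ∑ j ∈ Finset.univ.erase i,
          (w j k / (μ i - μ j)) * ∑ b, w j b * (μ b * z b) := by
      simp only [Matrix.mulVec, dotProduct, A, Matrix.of_apply, Finset.sum_mul]
      rw [Finset.sum_comm]
      exact Finset.sum_congr rfl fun j _ => by
        rw [Finset.mul_sum]
        exact Finset.sum_congr rfl fun b _ => by ring
    rw [hmv]
    have hin : ∀ j ∈ Finset.univ.erase i,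
        (w j k / (μ i - μ j)) * ∑ b, w j b * (μ b * z b) =
        w j k * (-(z i * z j)) := by
      intro j hj
      have hne : μ i - μ j ≠ 0 := by
        have : i ≠ j := (Finset.ne_of_mem_erase hj).symm
        exact sub_ne_zero.mpr fun h => this (hμ h)
      have hb : ∑ b, w j b * (μ b * z b) = z i * (μ j * z j) - z j * (μ i * z i) := by
        simp only [w, sub_mul, Finset.sum_sub_distrib, mul_assoc, mul_ite,
          ite_mul, one_mul, zero_mul, mul_one, mul_zero,
          Finset.sum_ite_eq' Finset.univ, Finset.mem_univ, if_pos]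
      rw [hb]
      field_simp
      ring
    rw [Finset.sum_congr rfl hin]
    by_cases hk : k = i
    · have h1 : ∀ j ∈ Finset.univ.erase i, w j k * (-(z i * z j)) = z i * z j ^ 2 := by
        intro j hj
        have hkj : ¬ (k = j) := fun h => (Finset.ne_of_mem_erase hj) (hk ▸ h).symm
        simp only [w, if_neg hkj, if_pos hk, mul_zero, mul_one, zero_sub]
        ring
      rw [Finset.sum_congr rfl h1, ← Finset.mul_sum]
      have h2 : ∑ j ∈ Finset.univ.erase i, z j ^ 2 = - z i ^ 2 := by
        have := Finset.add_sum_erase Finset.univ (fun j => z j ^ 2) (Finset.mem_univ i)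
        rw [hsum] at this
        linear_combination this
      rw [h2, hk]; ring
    · have : ∀ j ∈ Finset.univ.erase i, w j k * (-(z i * z j)) =
          (if k = j then 1 else 0) * (-(z i ^ 2 * z j)) := by
        intro j hj
        simp only [w, if_neg hk, mul_zero, sub_zero]
        ring
      rw [Finset.sum_congr rfl this]
      simp only [ite_mul, one_mul, zero_mul]
      rw [Finset.sum_ite_eq (Finset.univ.erase i) k]
      have hk' : k ∈ Finset.univ.erase i := Finset.mem_erase.mpr ⟨hk, Finset.mem_univ k⟩
      rw [if_pos hk']
      ring
  · intro hz
    have hA : A = Matrix.of (fun a b => (if a = i then (1 : ℂ) else 0) *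
            (if b = i then 1 else 0) *
            ∑ j ∈ Finset.univ.erase i, z j ^ 2 / (μ i - μ j)) := by
      ext a b
      simp only [A, Matrix.of_apply, w, hz, zero_mul, zero_sub]
      rw [Finset.mul_sum]
      exact Finset.sum_congr rfl fun j hj => by
        rw [neg_mul_neg]
        by_cases ha : a = i <;> by_cases hb : b = i <;>
          simp [ha, hb] <;> ring
    refine ⟨hA, ?_⟩
    rw [hA]
    have : Matrix.of (fun a b => (if a = i then (1 : ℂ) else 0) *
            (if b = i then 1 else 0) *
            ∑ j ∈ Finset.univ.erase i, z j ^ 2 / (μ i - μ j)) =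
        (Matrix.of fun a (_ : Fin 1) => if a = i then (1 : ℂ) else 0) *
        (Matrix.of fun (_ : Fin 1) b => (if b = i then (1 : ℂ) else 0) *
            ∑ j ∈ Finset.univ.erase i, z j ^ 2 / (μ i - μ j)) := by
      ext a b
      simp [Matrix.mul_apply, mul_assoc]
    rw [this]
    calc _ ≤ (Matrix.of fun a (_ : Fin 1) => if a = i then (1 : ℂ) else 0).rank :=
          Matrix.rank_mul_le_left _ _
      _ ≤ Fintype.card (Fin 1) := Matrix.rank_le_card_width _
      _ = 1 := by simp
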